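/- Let |~ be a conceptual cumulative consequence relation and 𝓜 its canonical model. Then for all formulas φ, ψ: φ |~ ψ if and only if φ |~_𝓜 ψ. -/

import Mathlib

namespace DR

/-- Formulas of the lattice-based language 𝓛: variables, ⊥, ⊤, ∧, ∨. -/
inductive Fm : Type where
  | var : ℕ → Fm
  | bot : Fm
  | top : Fm
  | and : Fm → Fm → Fm
  | or  : Fm → Fm → Fm

/-- A polarity (formal context) (A, X, I). -/
structure Polarity : Type 1 where
  Obj : Type
  Feat : Type
  I : Obj → Feat → Prop

namespace Polarity

variable (P : Polarity)

def up (B : Set P.Obj) : Set P.Feat := {x | ∀ b ∈ B, P.I b x}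
def dn (Y : Set P.Feat) : Set P.Obj := {a | ∀ y ∈ Y, P.I a y}

lemma subset_dn_up (B : Set P.Obj) : B ⊆ P.dn (P.up B) :=
  fun _ ha _ hx => hx _ ha

lemma subset_up_dn (Y : Set P.Feat) : Y ⊆ P.up (P.dn Y) :=
  fun _ hx _ ha => ha _ hx

lemma up_anti {B C : Set P.Obj} (h : B ⊆ C) : P.up C ⊆ P.up B :=
  fun _ hx b hb => hx b (h hb)

lemma dn_anti {Y Z : Set P.Feat} (h : Y ⊆ Z) : P.dn Z ⊆ P.dn Y :=
  fun _ ha y hy => ha y (h hy)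

end Polarity

/-- A formal concept of a polarity: a Galois-stable pair (extension, intension). -/
structure Concept (P : Polarity) : Type where
  ext : Set P.Obj
  int : Set P.Feat
  up_ext : P.up ext = int
  dn_int : P.dn int = ext

namespace Concept

variable {P : Polarity}

/-- Lattice meet of concepts: extensions intersect. -/
def meet (c d : Concept P) : Concept P where
  ext := c.ext ∩ d.ext
  int := P.up (c.ext ∩ d.ext)
  up_ext := rfl
  dn_int := by
    apply Set.Subset.antisymm
    · intro a ha
      constructor
      · rw [← c.dn_int]
        intro y hy
        apply ha
        rw [← c.up_ext] at hy
        exact P.up_anti Set.inter_subset_left hy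
      · rw [← d.dn_int]
        intro y hy
        apply ha
        rw [← d.up_ext] at hy
        exact P.up_anti Set.inter_subset_right hy
    · exact P.subset_dn_up _

/-- Lattice join of concepts: intensions intersect. -/
def join (c d : Concept P) : Concept P where
  ext := P.dn (c.int ∩ d.int)
  int := c.int ∩ d.int
  up_ext := by
    apply Set.Subset.antisymm
    · intro x hx
      constructor
      · rw [← c.up_ext]
        intro b hb
        apply hx
        rw [← c.dn_int] at hb
        exact P.dn_anti Set.inter_subset_left hb
      · rw [← d.up_ext]
        intro b hb
        apply hx
        rw [← d.dn_int] at hb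
        exact P.dn_anti Set.inter_subset_right hb
    · exact P.subset_up_dn _
  dn_int := rfl

/-- The greatest concept. -/
def top (P : Polarity) : Concept P where
  ext := Set.univ
  int := P.up Set.univ
  up_ext := rfl
  dn_int := Set.eq_univ_of_univ_subset (P.subset_dn_up _)

/-- The least concept. -/
def bot (P : Polarity) : Concept P where
  ext := P.dn Set.univ
  int := Set.univ
  up_ext := Set.eq_univ_of_univ_subset (P.subset_up_dn _)
  dn_int := rfl

end Concept

/-- A polarity-based model: a polarity with a valuation of variables into concepts. -/
structure Model : Type 1 where
  P : Polarity
  V : ℕ → Concept P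

namespace Model

/-- Homomorphic extension of the valuation to all formulas. -/
def interp (M : Model) : Fm → Concept M.P
  | .var n => M.V n
  | .bot => Concept.bot M.P
  | .top => Concept.top M.P
  | .and φ ψ => Concept.meet (M.interp φ) (M.interp ψ)
  | .or φ ψ => Concept.join (M.interp φ) (M.interp ψ)

/-- M, a ⊩ φ : the object a is in the extension of φ. -/
def objSat (M : Model) (a : M.P.Obj) (φ : Fm) : Prop := a ∈ (M.interp φ).ext

/-- M, x ≻ φ : the feature x is in the intension of φ. -/
def featSat (M : Model) (x : M.P.Feat) (φ : Fm) : Prop := x ∈ (M.interp φ).int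

end Model

/-- Validity of the sequent φ ⊢ ψ: in every polarity-based model the
extension of φ is contained in the extension of ψ. -/
def SeqValid (φ ψ : Fm) : Prop :=
  ∀ M : Model, (M.interp φ).ext ⊆ (M.interp ψ).ext

/-- A conceptual cumulative consequence relation: reflexive and closed
under (LLE), (RW), (CM) and (Cut). -/
structure IsCumulative (R : Fm → Fm → Prop) : Prop where
  refl : ∀ φ, R φ φ
  lle : ∀ φ ψ χ, SeqValid φ ψ → SeqValid ψ φ → R φ χ → R ψ χ
  rw : ∀ φ ψ χ, SeqValid φ ψ → R χ φ → R χ ψ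
  cm : ∀ φ ψ χ, R φ ψ → R φ χ → R (Fm.and φ ψ) χ
  cut : ∀ φ ψ χ, R (Fm.and φ ψ) χ → R φ ψ → R φ χ

/-- Closure under the rule (Loop). -/
def LoopClosed (R : Fm → Fm → Prop) : Prop :=
  ∀ (n : ℕ) (φ : ℕ → Fm),
    (∀ i < n, R (φ i) (φ (i + 1))) → R (φ n) (φ 0) → R (φ 0) (φ n)

/-- A pointed polarity-based model. -/
structure PointedModel : Type 1 where
  M : Model
  pt : M.P.Obj

/-- Satisfaction at a pointed model. -/
def PointedModel.sat (Ma : PointedModel) (φ : Fm) : Prop := Ma.M.objSat Ma.pt φ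

/-- A pointed model is normal for φ iff it satisfies every plausible consequence of φ. -/
def NormalFor (R : Fm → Fm → Prop) (Ma : PointedModel) (φ : Fm) : Prop :=
  ∀ ψ, R φ ψ → Ma.sat ψ

/-- A pointed model is supernormal for φ. -/
def SupernormalFor (R : Fm → Fm → Prop) (Ma : PointedModel) (φ : Fm) : Prop :=
  ∀ ψ, R φ ψ ↔ Ma.sat ψ

/-- A frame (S, l, ≺): states labelled by sets of pointed polarity-based
models with a preference relation. -/
structure Frame : Type 2 where
  S : Type
  l : S → Set PointedModel
  prec : S → S → Prop

/-- t is minimal in P (w.r.t. prec). -/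
def MinimalIn {α : Type _} (prec : α → α → Prop) (P : Set α) (t : α) : Prop :=
  t ∈ P ∧ ∀ s ∈ P, ¬ prec s t

/-- t is a minimum of P (w.r.t. prec). -/
def IsMinimum {α : Type _} (prec : α → α → Prop) (P : Set α) (t : α) : Prop :=
  t ∈ P ∧ ∀ s ∈ P, s ≠ t → prec t s

/-- P is smooth (w.r.t. prec). -/
def Smooth {α : Type _} (prec : α → α → Prop) (P : Set α) : Prop :=
  ∀ t ∈ P, MinimalIn prec P t ∨ ∃ s, MinimalIn prec P s ∧ prec s t

namespace Frame

/-- s ⊨ φ : every pointed model in l(s) satisfies φ. -/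
def stateSat (F : Frame) (s : F.S) (φ : Fm) : Prop :=
  ∀ Ma ∈ F.l s, Ma.sat φ

/-- φ̂ : the set of states satisfying φ. -/
def hat (F : Frame) (φ : Fm) : Set F.S := {s | F.stateSat s φ}

/-- A conceptual cumulative model: φ̂ is smooth for every φ. -/
def IsCumulativeModel (F : Frame) : Prop :=
  ∀ φ : Fm, Smooth F.prec (F.hat φ)

/-- The consequence relation |~_𝓜 defined by a frame: every state minimal
in φ̂ belongs to ψ̂. -/
def conseq (F : Frame) (φ ψ : Fm) : Prop :=
  ∀ s, MinimalIn F.prec (F.hat φ) s → s ∈ F.hat ψ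

/-- Replace the preference relation of a frame. -/
def withPrec (F : Frame) (p : F.S → F.S → Prop) : Frame := ⟨F.S, F.l, p⟩

end Frame

/-- The equivalence class φ/∼ of φ under ∼ (φ ∼ ψ iff φ |~ ψ and ψ |~ φ). -/
def cls (R : Fm → Fm → Prop) (φ : Fm) : Set Fm := {ψ | R φ ψ ∧ R ψ φ}

/-- φ/∼ ≤ ψ/∼ : there is χ ∈ φ/∼ with ψ |~ χ (ψ any representative of ψ/∼). -/
def clsLE (R : Fm → Fm → Prop) (C D : Set Fm) : Prop :=
  ∃ χ ∈ C, ∃ ψ ∈ D, R ψ χ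

/-- The canonical model of a consequence relation: states are the
equivalence classes φ/∼, labelled by the normal pointed models for φ,
with φ/∼ ≺ ψ/∼ iff φ/∼ ≤ ψ/∼ and φ/∼ ≠ ψ/∼. -/
def canonicalFrame (R : Fm → Fm → Prop) : Frame where
  S := {C : Set Fm // ∃ φ, C = cls R φ}
  l := fun s => {Ma | ∃ φ, s.val = cls R φ ∧ NormalFor R Ma φ}
  prec := fun s t => clsLE R s.val t.val ∧ s ≠ t

/-- The state φ/∼ of the canonical model. -/
def canonicalState (R : Fm → Fm → Prop) (φ : Fm) : (canonicalFrame R).S :=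
  ⟨cls R φ, φ, rfl⟩


/-! ### Auxiliary lemmas -/

section AuxSV

lemma sv_refl (φ : Fm) : SeqValid φ φ := fun _ => subset_rfl

lemma sv_trans {a b c : Fm} (h1 : SeqValid a b) (h2 : SeqValid b c) : SeqValid a c :=
  fun M => (h1 M).trans (h2 M)

lemma sv_top (φ : Fm) : SeqValid φ Fm.top := fun _ _ _ => trivial

lemma sv_bot (φ : Fm) : SeqValid Fm.bot φ := fun M a ha => by
  rw [← (M.interp φ).dn_int]
  intro y _
  exact ha y trivial

lemma sv_and_l (a b : Fm) : SeqValid (a.and b) a := fun _ => Set.inter_subset_left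

lemma sv_and_r (a b : Fm) : SeqValid (a.and b) b := fun _ => Set.inter_subset_right

lemma sv_and_intro {c a b : Fm} (h1 : SeqValid c a) (h2 : SeqValid c b) :
    SeqValid c (a.and b) := fun M x hx => ⟨h1 M hx, h2 M hx⟩

lemma sv_and_comm (a b : Fm) : SeqValid (a.and b) (b.and a) :=
  sv_and_intro (sv_and_r a b) (sv_and_l a b)

lemma sv_or_l (a b : Fm) : SeqValid a (a.or b) := fun M x hx => by
  rw [← (M.interp a).dn_int] at hx
  intro y hy
  exact hx y hy.1

lemma sv_or_r (a b : Fm) : SeqValid b (a.or b) := fun M x hx => by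
  rw [← (M.interp b).dn_int] at hx
  intro y hy
  exact hx y hy.2

lemma sv_or_elim {a b c : Fm} (h1 : SeqValid a c) (h2 : SeqValid b c) :
    SeqValid (a.or b) c := fun M x hx => by
  rw [← (M.interp c).dn_int]
  intro y hy
  rw [← (M.interp c).up_ext] at hy
  refine hx y ⟨?_, ?_⟩
  · rw [← (M.interp a).up_ext]; exact fun o ho => hy o (h1 M ho)
  · rw [← (M.interp b).up_ext]; exact fun o ho => hy o (h2 M ho)

end AuxSV

section AuxR

variable {R : Fm → Fm → Prop}

/-- Derived rule (And). -/
lemma r_and (h : IsCumulative R) {φ a b : Fm} (ha : R φ a) (hb : R φ b) :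
    R φ (a.and b) := by
  have h1 : R (φ.and a) b := h.cm φ a b ha hb
  have h2 : R ((φ.and a).and b) (a.and b) :=
    h.rw _ _ _
      (sv_and_intro (sv_trans (sv_and_l (φ.and a) b) (sv_and_r φ a)) (sv_and_r (φ.and a) b))
      (h.refl ((φ.and a).and b))
  have h3 : R (φ.and a) (a.and b) := h.cut _ _ _ h2 h1
  exact h.cut _ _ _ h3 ha

/-- Derived rule (Equivalence): left sides mutually plausible can be exchanged. -/
lemma r_eq (h : IsCumulative R) {a b x : Fm} (hab : R a b) (hba : R b a) (hx : R a x) :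
    R b x := by
  have h1 : R (a.and b) x := h.cm a b x hab hx
  have h2 : R (b.and a) x := h.lle _ _ _ (sv_and_comm a b) (sv_and_comm b a) h1
  exact h.cut b a x h2 hba

end AuxR

/-! ### The canonical polarity model over theories -/

/-- A theory: contains ⊤, upward closed under lattice consequence, closed under ∧. -/
def IsTheory (T : Set Fm) : Prop :=
  Fm.top ∈ T ∧ (∀ a b, a ∈ T → SeqValid a b → b ∈ T) ∧ (∀ a b, a ∈ T → b ∈ T → a.and b ∈ T)

/-- The principal theory of χ. -/
def princ (χ : Fm) : Set Fm := {x | SeqValid χ x}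

lemma princ_theory (χ : Fm) : IsTheory (princ χ) :=
  ⟨sv_top χ, fun _ _ ha hab => sv_trans ha hab, fun _ _ ha hb => sv_and_intro ha hb⟩

lemma mem_princ_self (χ : Fm) : χ ∈ princ χ := sv_refl χ

/-- The canonical polarity: objects are theories, features are formulas. -/
def canP : Polarity where
  Obj := {T : Set Fm // IsTheory T}
  Feat := Fm
  I := fun T x => x ∈ T.val

lemma up_eq (χ : Fm) : canP.up {T : canP.Obj | χ ∈ T.val} = princ χ := by
  ext x
  constructor
  · intro hx
    exact hx ⟨princ χ, princ_theory χ⟩ (mem_princ_self χ)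
  · intro hx T hT
    exact T.prop.2.1 χ x hT hx

lemma dn_eq (χ : Fm) : canP.dn (princ χ) = {T : canP.Obj | χ ∈ T.val} := by
  ext T
  constructor
  · intro hT
    exact hT χ (mem_princ_self χ)
  · intro hT x hx
    exact T.prop.2.1 χ x hT hx

lemma princ_or (a b : Fm) : princ a ∩ princ b = princ (a.or b) := by
  ext x
  constructor
  · rintro ⟨h1, h2⟩
    exact sv_or_elim h1 h2
  · intro hx
    exact ⟨sv_trans (sv_or_l a b) hx, sv_trans (sv_or_r a b) hx⟩

/-- The canonical model over theories. -/
def canM : Model :=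
  ⟨canP, fun n => ⟨{T | Fm.var n ∈ T.val}, princ (Fm.var n), up_eq _, dn_eq _⟩⟩

lemma canM_interp_ext (χ : Fm) :
    (canM.interp χ).ext = {T : canP.Obj | χ ∈ T.val} := by
  induction χ with
  | var n => rfl
  | bot =>
      show canP.dn Set.univ = _
      ext T
      constructor
      · intro hT
        exact hT Fm.bot trivial
      · intro hT x _
        exact T.prop.2.1 Fm.bot x hT (sv_bot x)
  | top =>
      show Set.univ = _
      ext T
      exact ⟨fun _ => T.prop.1, fun _ => trivial⟩
  | and a b iha ihb =>
      show (canM.interp a).ext ∩ (canM.interp b).ext = _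
      rw [iha, ihb]
      ext T
      constructor
      · rintro ⟨h1, h2⟩
        exact T.prop.2.2 a b h1 h2
      · intro hT
        exact ⟨T.prop.2.1 _ a hT (sv_and_l a b), T.prop.2.1 _ b hT (sv_and_r a b)⟩
  | or a b iha ihb =>
      show canP.dn ((canM.interp a).int ∩ (canM.interp b).int) = _
      rw [← (canM.interp a).up_ext, ← (canM.interp b).up_ext, iha, ihb]
      show canP.dn (canP.up {T : canP.Obj | a ∈ T.val} ∩ canP.up {T : canP.Obj | b ∈ T.val}) = _
      rw [up_eq, up_eq]
      exact (congrArg canP.dn (princ_or a b)).trans (dn_eq _)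

/-- The set of plausible consequences of φ is a theory. -/
lemma theory_of_R {R : Fm → Fm → Prop} (h : IsCumulative R) (φ : Fm) :
    IsTheory {x | R φ x} :=
  ⟨h.rw φ Fm.top φ (sv_top φ) (h.refl φ),
   fun a b ha hab => h.rw a b φ hab ha,
   fun _ _ ha hb => r_and h ha hb⟩

/-- A supernormal pointed model for φ. -/
def superPM {R : Fm → Fm → Prop} (h : IsCumulative R) (φ : Fm) : PointedModel :=
  ⟨canM, ⟨{x | R φ x}, theory_of_R h φ⟩⟩

lemma superPM_sat {R : Fm → Fm → Prop} (h : IsCumulative R) (φ χ : Fm) :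
    (superPM h φ).sat χ ↔ R φ χ := by
  show (superPM h φ).pt ∈ (canM.interp χ).ext ↔ _
  rw [canM_interp_ext]
  exact Iff.rfl

lemma superPM_normal {R : Fm → Fm → Prop} (h : IsCumulative R) (φ : Fm) :
    NormalFor R (superPM h φ) φ :=
  fun ψ hψ => (superPM_sat h φ ψ).mpr hψ

/-! ### The key canonical-frame lemmas -/

lemma stateSat_iff {R : Fm → Fm → Prop} (h : IsCumulative R) (ρ : Fm)
    (s : (canonicalFrame R).S) (hs : s.val = cls R ρ) (χ : Fm) :
    (canonicalFrame R).stateSat s χ ↔ R ρ χ := by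
  constructor
  · intro hsat
    have hmem : superPM h ρ ∈ (canonicalFrame R).l s := ⟨ρ, hs, superPM_normal h ρ⟩
    exact (superPM_sat h ρ χ).mp (hsat _ hmem)
  · intro hχ Ma hMa
    obtain ⟨ρ', hval, hnorm⟩ := hMa
    have hmem : ρ' ∈ cls R ρ := by
      have : cls R ρ = cls R ρ' := hs ▸ hval
      rw [this]
      exact ⟨h.refl ρ', h.refl ρ'⟩
    exact hnorm χ (r_eq h hmem.1 hmem.2 hχ)

/-- Antisymmetry of ≤ up to ∼ : mutually ≤ classes coincide. -/
lemma cls_eq_of_le_le {R : Fm → Fm → Prop} (h : IsCumulative R) {a b : Fm}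
    (h1 : clsLE R (cls R a) (cls R b)) (h2 : clsLE R (cls R b) (cls R a)) :
    cls R a = cls R b := by
  obtain ⟨χ, ⟨haχ, hχa⟩, ψ', ⟨hbψ, hψb⟩, hψχ⟩ := h1
  obtain ⟨χ₂, ⟨hbχ₂, hχ₂b⟩, σ, ⟨haσ, hσa⟩, hσχ₂⟩ := h2
  have hbχ : R b χ := r_eq h hψb hbψ hψχ
  have haχ₂ : R a χ₂ := r_eq h hσa haσ hσχ₂
  have hχ₂χ : R χ₂ χ := r_eq h hbχ₂ hχ₂b hbχ
  have hχχ₂ : R χ χ₂ := r_eq h haχ hχa haχ₂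
  have key : ∀ x, R a x ↔ R b x := by
    intro x
    constructor
    · intro hx
      exact r_eq h hχ₂b hbχ₂ (r_eq h hχχ₂ hχ₂χ (r_eq h haχ hχa hx))
    · intro hx
      exact r_eq h hχa haχ (r_eq h hχ₂χ hχχ₂ (r_eq h hbχ₂ hχ₂b hx))
  have hab : R a b := (key b).mpr (h.refl b)
  have hba : R b a := (key a).mp (h.refl a)
  ext x
  constructor
  · rintro ⟨hax, hxa⟩
    exact ⟨(key x).mp hax, r_eq h hax hxa hab⟩
  · rintro ⟨hbx, hxb⟩
    exact ⟨(key x).mpr hbx, r_eq h hbx hxb hba⟩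

/-- φ |~ ψ iff φ |~_𝓜 ψ in the canonical model 𝓜. -/
theorem canonical_conseq_iff (R : Fm → Fm → Prop) (h : IsCumulative R)
    (φ ψ : Fm) :
    R φ ψ ↔ (canonicalFrame R).conseq φ ψ := by
  constructor
  · intro hφψ s hmin
    obtain ⟨ρ, hρ⟩ := s.prop
    have hsφ : R ρ φ := (stateSat_iff h ρ s hρ φ).mp hmin.1
    have huφ : canonicalState R φ ∈ (canonicalFrame R).hat φ :=
      (stateSat_iff h φ (canonicalState R φ) rfl φ).mpr (h.refl φ)
    have hle : clsLE R (canonicalState R φ).val s.val :=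
      ⟨φ, ⟨h.refl φ, h.refl φ⟩, ρ, hρ ▸ ⟨h.refl ρ, h.refl ρ⟩, hsφ⟩
    have hus : canonicalState R φ = s := by
      by_contra hne
      exact hmin.2 (canonicalState R φ) huφ ⟨hle, hne⟩
    have hcc : cls R φ = cls R ρ := by
      have : (canonicalState R φ).val = s.val := by rw [hus]
      rw [← hρ, ← this]
      rfl
    have hmemρ : ρ ∈ cls R φ := by
      rw [hcc]
      exact ⟨h.refl ρ, h.refl ρ⟩
    exact (stateSat_iff h ρ s hρ ψ).mpr (r_eq h hmemρ.1 hmemρ.2 hφψ)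
  · intro hcon
    have hmin : MinimalIn (canonicalFrame R).prec ((canonicalFrame R).hat φ)
        (canonicalState R φ) := by
      refine ⟨(stateSat_iff h φ (canonicalState R φ) rfl φ).mpr (h.refl φ), ?_⟩
      intro s hsφ hprec
      obtain ⟨hle, hne⟩ := hprec
      obtain ⟨ρ, hρ⟩ := s.prop
      have hRρφ : R ρ φ := (stateSat_iff h ρ s hρ φ).mp hsφ
      have h1 : clsLE R (cls R ρ) (cls R φ) := by rw [← hρ]; exact hle
      have h2 : clsLE R (cls R φ) (cls R ρ) :=
        ⟨φ, ⟨h.refl φ, h.refl φ⟩, ρ, ⟨h.refl ρ, h.refl ρ⟩, hRρφ⟩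
      have hcc : cls R ρ = cls R φ := cls_eq_of_le_le h h1 h2
      exact hne (Subtype.ext (by rw [hρ, hcc]; rfl))
    exact (stateSat_iff h φ (canonicalState R φ) rfl ψ).mp (hcon _ hmin)

end DR
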